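/- For Φ real-valued of class C^n and x₀ ∈ (a,b), the diagonal entries of the Wronskian matrix of the functions 𝒴₀,…,𝒴ₙ at x = x₀ are 𝒴_m^(m)(x₀,x₀) = m!·Φ(x₀) for m odd and m! for m even; consequently the Wronskian 𝒲ₙ(x₀) = (∏_{k=0}^n k!)·Φ(x₀)^{(n+1)/2} if n is odd and (∏_{k=0}^n k!)·Φ(x₀)^{n/2} if n is even, and the functions 𝒴₀(x₀,·),…,𝒴ₙ(x₀,·) are linearly independent. -/

import Mathlib

open Set MeasureTheory intervalIntegral Topology

noncomputable def genX (Φ : ℝ → ℝ) : ℕ → ℝ → ℝ → ℝ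
  | 0 => fun _ _ => 1
  | n + 1 => fun x₀ x =>
      (n + 1 : ℕ) * ∫ ξ in x₀..x, genX Φ n x₀ ξ * Φ ξ ^ ((-1 : ℤ) ^ (n + 1))

noncomputable def genXt (Φ : ℝ → ℝ) : ℕ → ℝ → ℝ → ℝ
  | 0 => fun _ _ => 1
  | n + 1 => fun x₀ x =>
      (n + 1 : ℕ) * ∫ ξ in x₀..x, genXt Φ n x₀ ξ * Φ ξ ^ (-((-1 : ℤ) ^ (n + 1)))

noncomputable def genY (Φ : ℝ → ℝ) (n : ℕ) (x₀ x : ℝ) : ℝ :=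
  if n % 2 = 1 then genXt Φ n x₀ x else genX Φ n x₀ x

noncomputable def genYt (Φ : ℝ → ℝ) (n : ℕ) (x₀ x : ℝ) : ℝ :=
  if n % 2 = 1 then genX Φ n x₀ x else genXt Φ n x₀ x

section Aux

variable {a b x₀ : ℝ} {Φ : ℝ → ℝ}

lemma aux_primitive {f : ℝ → ℝ} (hf : ContinuousOn f (Set.Ioo a b))
    (hx₀ : x₀ ∈ Set.Ioo a b) {x : ℝ} (hx : x ∈ Set.Ioo a b) :
    HasDerivAt (fun y => ∫ t in x₀..y, f t) (f x) x :=
  intervalIntegral.integral_hasDerivAt_right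
    ((hf.mono (Set.ordConnected_Ioo.uIcc_subset hx₀ hx)).intervalIntegrable)
    (hf.stronglyMeasurableAtFilter isOpen_Ioo x hx)
    (hf.continuousAt (isOpen_Ioo.mem_nhds hx))

lemma aux_zpow_cont (hΦ : ContinuousOn Φ (Set.Ioo a b))
    (hΦ0 : ∀ y ∈ Set.Ioo a b, Φ y ≠ 0) (e : ℤ) :
    ContinuousOn (fun x => Φ x ^ e) (Set.Ioo a b) := by
  rcases le_or_gt 0 e with he | he
  · lift e to ℕ using he
    simp only [zpow_natCast]; exact hΦ.pow e
  · obtain ⟨k, rfl⟩ : ∃ k : ℕ, e = -(k : ℤ) := ⟨e.natAbs, by omega⟩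
    have h : (fun x => Φ x ^ (-(k : ℤ))) = fun x => (Φ x ^ k)⁻¹ := by
      funext x; rw [zpow_neg, zpow_natCast]
    rw [h]
    exact (hΦ.pow k).inv₀ fun x hx => pow_ne_zero _ (hΦ0 x hx)

lemma aux_cont (hΦ : ContinuousOn Φ (Set.Ioo a b))
    (hΦ0 : ∀ y ∈ Set.Ioo a b, Φ y ≠ 0) (hx₀ : x₀ ∈ Set.Ioo a b) (m : ℕ) :
    ContinuousOn (genX Φ m x₀) (Set.Ioo a b) ∧
      ContinuousOn (genXt Φ m x₀) (Set.Ioo a b) := by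
  induction m with
  | zero => constructor <;> simp [genX, genXt, continuousOn_const]
  | succ m IH =>
    constructor
    · have hint : ContinuousOn (fun ξ => genX Φ m x₀ ξ * Φ ξ ^ ((-1 : ℤ) ^ (m + 1)))
          (Set.Ioo a b) := IH.1.mul (aux_zpow_cont hΦ hΦ0 _)
      simp only [genX]
      exact continuousOn_const.mul fun x hx =>
        ((aux_primitive hint hx₀ hx).continuousAt).continuousWithinAt
    · have hint : ContinuousOn (fun ξ => genXt Φ m x₀ ξ * Φ ξ ^ (-((-1 : ℤ) ^ (m + 1))))
          (Set.Ioo a b) := IH.2.mul (aux_zpow_cont hΦ hΦ0 _)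
      simp only [genXt]
      exact continuousOn_const.mul fun x hx =>
        ((aux_primitive hint hx₀ hx).continuousAt).continuousWithinAt

lemma aux_derivX (hΦ : ContinuousOn Φ (Set.Ioo a b))
    (hΦ0 : ∀ y ∈ Set.Ioo a b, Φ y ≠ 0) (hx₀ : x₀ ∈ Set.Ioo a b) (m : ℕ)
    {x : ℝ} (hx : x ∈ Set.Ioo a b) :
    HasDerivAt (genX Φ (m + 1) x₀)
      (((m + 1 : ℕ) : ℝ) * (genX Φ m x₀ x * Φ x ^ ((-1 : ℤ) ^ (m + 1)))) x := by
  have hint : ContinuousOn (fun ξ => genX Φ m x₀ ξ * Φ ξ ^ ((-1 : ℤ) ^ (m + 1)))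
      (Set.Ioo a b) := (aux_cont hΦ hΦ0 hx₀ m).1.mul (aux_zpow_cont hΦ hΦ0 _)
  have h := (aux_primitive hint hx₀ hx).const_mul ((m + 1 : ℕ) : ℝ)
  simpa only [genX] using h

lemma aux_derivXt (hΦ : ContinuousOn Φ (Set.Ioo a b))
    (hΦ0 : ∀ y ∈ Set.Ioo a b, Φ y ≠ 0) (hx₀ : x₀ ∈ Set.Ioo a b) (m : ℕ)
    {x : ℝ} (hx : x ∈ Set.Ioo a b) :
    HasDerivAt (genXt Φ (m + 1) x₀)
      (((m + 1 : ℕ) : ℝ) * (genXt Φ m x₀ x * Φ x ^ (-((-1 : ℤ) ^ (m + 1))))) x := by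
  have hint : ContinuousOn (fun ξ => genXt Φ m x₀ ξ * Φ ξ ^ (-((-1 : ℤ) ^ (m + 1))))
      (Set.Ioo a b) := (aux_cont hΦ hΦ0 hx₀ m).2.mul (aux_zpow_cont hΦ hΦ0 _)
  have h := (aux_primitive hint hx₀ hx).const_mul ((m + 1 : ℕ) : ℝ)
  simpa only [genXt] using h

lemma aux_derivY (hΦ : ContinuousOn Φ (Set.Ioo a b))
    (hΦ0 : ∀ y ∈ Set.Ioo a b, Φ y ≠ 0) (hx₀ : x₀ ∈ Set.Ioo a b) (m : ℕ)
    {x : ℝ} (hx : x ∈ Set.Ioo a b) :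
    HasDerivAt (genY Φ (m + 1) x₀) (((m + 1 : ℕ) : ℝ) * (genYt Φ m x₀ x * Φ x)) x ∧
    HasDerivAt (genYt Φ (m + 1) x₀) (((m + 1 : ℕ) : ℝ) * (genY Φ m x₀ x * (Φ x)⁻¹)) x := by
  rcases Nat.even_or_odd m with hm | hm
  · have h2 : m % 2 = 0 := Nat.even_iff.mp hm
    have h2' : (m + 1) % 2 = 1 := by omega
    have hodd : Odd (m + 1) := Nat.odd_iff.mpr h2'
    have e1 : (-((-1 : ℤ) ^ (m + 1))) = 1 := by rw [hodd.neg_one_pow, neg_neg]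
    have e2 : ((-1 : ℤ) ^ (m + 1)) = -1 := hodd.neg_one_pow
    have hY : genY Φ (m + 1) x₀ = genXt Φ (m + 1) x₀ := funext fun y => by simp [genY, h2']
    have hYt : genYt Φ (m + 1) x₀ = genX Φ (m + 1) x₀ := funext fun y => by simp [genYt, h2']
    have hy : genY Φ m x₀ x = genX Φ m x₀ x := by simp [genY, h2]
    have hyt : genYt Φ m x₀ x = genXt Φ m x₀ x := by simp [genYt, h2]
    constructor
    · have h := aux_derivXt hΦ hΦ0 hx₀ m hx
      rw [e1, zpow_one] at h
      rw [hY, hyt]; exact h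
    · have h := aux_derivX hΦ hΦ0 hx₀ m hx
      rw [e2, zpow_neg_one] at h
      rw [hYt, hy]; exact h
  · have h2 : m % 2 = 1 := Nat.odd_iff.mp hm
    have h2' : (m + 1) % 2 = 0 := by omega
    have heven : Even (m + 1) := Nat.even_iff.mpr h2'
    have e1 : ((-1 : ℤ) ^ (m + 1)) = 1 := heven.neg_one_pow
    have e2 : (-((-1 : ℤ) ^ (m + 1))) = -1 := by rw [heven.neg_one_pow]
    have hY : genY Φ (m + 1) x₀ = genX Φ (m + 1) x₀ := funext fun y => by simp [genY, h2']
    have hYt : genYt Φ (m + 1) x₀ = genXt Φ (m + 1) x₀ := funext fun y => by simp [genYt, h2']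
    have hy : genY Φ m x₀ x = genXt Φ m x₀ x := by simp [genY, h2]
    have hyt : genYt Φ m x₀ x = genX Φ m x₀ x := by simp [genYt, h2]
    constructor
    · have h := aux_derivX hΦ hΦ0 hx₀ m hx
      rw [e1, zpow_one] at h
      rw [hY, hyt]; exact h
    · have h := aux_derivXt hΦ hΦ0 hx₀ m hx
      rw [e2, zpow_neg_one] at h
      rw [hYt, hy]; exact h


lemma aux_smooth {n : ℕ} (hΦ : ContDiffOn ℝ n Φ (Set.Ioo a b))
    (hΦ0 : ∀ y ∈ Set.Ioo a b, Φ y ≠ 0) (hx₀ : x₀ ∈ Set.Ioo a b) (m : ℕ) :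
    ContDiffOn ℝ (n + 1 : ℕ) (genY Φ m x₀) (Set.Ioo a b) ∧
      ContDiffOn ℝ (n + 1 : ℕ) (genYt Φ m x₀) (Set.Ioo a b) := by
  have hΦc : ContinuousOn Φ (Set.Ioo a b) := hΦ.continuousOn
  have hle : ((n : ℕ∞) : WithTop ℕ∞) ≤ ((n + 1 : ℕ) : WithTop ℕ∞) := by
    exact_mod_cast Nat.le_succ n
  have hcast : (((n + 1 : ℕ) : WithTop ℕ∞)) = (n : WithTop ℕ∞) + 1 := by push_cast; rfl
  induction m with
  | zero =>
    constructor
    · have : genY Φ 0 x₀ = fun _ => (1 : ℝ) := funext fun y => by simp [genY, genX]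
      rw [this]; exact contDiffOn_const
    · have : genYt Φ 0 x₀ = fun _ => (1 : ℝ) := funext fun y => by simp [genYt, genXt]
      rw [this]; exact contDiffOn_const
  | succ m IH =>
    have hne : ((n : ℕ) : WithTop ℕ∞) ≠ (⊤ : WithTop ℕ∞) := by
      exact_mod_cast WithTop.natCast_ne_top n
    constructor
    · rw [hcast, contDiffOn_succ_iff_deriv_of_isOpen isOpen_Ioo]
      refine ⟨fun x hx => ((aux_derivY hΦc hΦ0 hx₀ m hx).1.differentiableAt).differentiableWithinAt,
        ?_, ?_⟩
      · intro h; exact absurd h hne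
      · refine ContDiffOn.congr ?_ fun x hx => (aux_derivY hΦc hΦ0 hx₀ m hx).1.deriv
        exact contDiffOn_const.mul ((IH.2.of_le hle).mul hΦ)
    · rw [hcast, contDiffOn_succ_iff_deriv_of_isOpen isOpen_Ioo]
      refine ⟨fun x hx => ((aux_derivY hΦc hΦ0 hx₀ m hx).2.differentiableAt).differentiableWithinAt,
        ?_, ?_⟩
      · intro h; exact absurd h hne
      · refine ContDiffOn.congr ?_ fun x hx => (aux_derivY hΦc hΦ0 hx₀ m hx).2.deriv
        exact contDiffOn_const.mul ((IH.1.of_le hle).mul (hΦ.inv hΦ0))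

lemma aux_L1 {s : Set ℝ} (hs : IsOpen s) {x₀ : ℝ} (hx₀ : x₀ ∈ s) :
    ∀ (k : ℕ) (u v : ℝ → ℝ), ContDiffOn ℝ k u s → ContDiffOn ℝ k v s →
      (∀ i ≤ k, iteratedDerivWithin i u s x₀ = 0) →
      iteratedDerivWithin k (fun x => u x * v x) s x₀ = 0 := by
  intro k
  induction k with
  | zero =>
    intro u v _ _ h0
    have := h0 0 le_rfl
    rw [iteratedDerivWithin_zero] at this ⊢
    simp [this]
  | succ k IH =>
    intro u v hu hv h0
    have uD : UniqueDiffOn ℝ s := hs.uniqueDiffOn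
    have h1 : (1 : WithTop ℕ∞) ≤ ((k + 1 : ℕ) : WithTop ℕ∞) := by
      exact_mod_cast Nat.succ_le_succ (Nat.zero_le k)
    have hstep : ((k : ℕ) : WithTop ℕ∞) ≤ ((k + 1 : ℕ) : WithTop ℕ∞) := by
      exact_mod_cast Nat.le_succ k
    have hd1 : ((k : ℕ) : WithTop ℕ∞) + 1 ≤ ((k + 1 : ℕ) : WithTop ℕ∞) := by
      exact_mod_cast le_rfl
    have hdu : DifferentiableOn ℝ u s := hu.differentiableOn (by exact_mod_cast Nat.succ_ne_zero k)
    have hdv : DifferentiableOn ℝ v s := hv.differentiableOn (by exact_mod_cast Nat.succ_ne_zero k)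
    have cu' : ContDiffOn ℝ k (derivWithin u s) s := hu.derivWithin uD hd1
    have cv' : ContDiffOn ℝ k (derivWithin v s) s := hv.derivWithin uD hd1
    rw [iteratedDerivWithin_succ']
    have heq : Set.EqOn (derivWithin (fun x => u x * v x) s)
        ((fun x => derivWithin u s x * v x) + fun x => u x * derivWithin v s x) s :=
      fun x hx => derivWithin_fun_mul (hdu x hx) (hdv x hx)
    rw [iteratedDerivWithin_congr heq hx₀]
    rw [iteratedDerivWithin_add hx₀ uD ((cu'.mul (hv.of_le hstep)) x₀ hx₀)
      (((hu.of_le hstep).mul cv') x₀ hx₀)]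
    rw [IH _ _ cu' (hv.of_le hstep) fun i hi => by
        rw [← iteratedDerivWithin_succ']; exact h0 (i + 1) (by omega)]
    rw [IH _ _ (hu.of_le hstep) cv' fun i hi => h0 i (by omega)]
    simp

lemma aux_L2 {s : Set ℝ} (hs : IsOpen s) {x₀ : ℝ} (hx₀ : x₀ ∈ s) :
    ∀ (k : ℕ) (u v : ℝ → ℝ), ContDiffOn ℝ k u s → ContDiffOn ℝ k v s →
      (∀ i < k, iteratedDerivWithin i u s x₀ = 0) →
      iteratedDerivWithin k (fun x => u x * v x) s x₀ =
        iteratedDerivWithin k u s x₀ * v x₀ := by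
  intro k
  induction k with
  | zero =>
    intro u v _ _ _
    rw [iteratedDerivWithin_zero, iteratedDerivWithin_zero]
  | succ k IH =>
    intro u v hu hv h0
    have uD : UniqueDiffOn ℝ s := hs.uniqueDiffOn
    have h1 : (1 : WithTop ℕ∞) ≤ ((k + 1 : ℕ) : WithTop ℕ∞) := by
      exact_mod_cast Nat.succ_le_succ (Nat.zero_le k)
    have hstep : ((k : ℕ) : WithTop ℕ∞) ≤ ((k + 1 : ℕ) : WithTop ℕ∞) := by
      exact_mod_cast Nat.le_succ k
    have hd1 : ((k : ℕ) : WithTop ℕ∞) + 1 ≤ ((k + 1 : ℕ) : WithTop ℕ∞) := by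
      exact_mod_cast le_rfl
    have hdu : DifferentiableOn ℝ u s := hu.differentiableOn (by exact_mod_cast Nat.succ_ne_zero k)
    have hdv : DifferentiableOn ℝ v s := hv.differentiableOn (by exact_mod_cast Nat.succ_ne_zero k)
    have cu' : ContDiffOn ℝ k (derivWithin u s) s := hu.derivWithin uD hd1
    have cv' : ContDiffOn ℝ k (derivWithin v s) s := hv.derivWithin uD hd1
    rw [iteratedDerivWithin_succ']
    have heq : Set.EqOn (derivWithin (fun x => u x * v x) s)
        ((fun x => derivWithin u s x * v x) + fun x => u x * derivWithin v s x) s :=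
      fun x hx => derivWithin_fun_mul (hdu x hx) (hdv x hx)
    rw [iteratedDerivWithin_congr heq hx₀]
    rw [iteratedDerivWithin_add hx₀ uD ((cu'.mul (hv.of_le hstep)) x₀ hx₀)
      (((hu.of_le hstep).mul cv') x₀ hx₀)]
    rw [IH _ _ cu' (hv.of_le hstep) fun i hi => by
        rw [← iteratedDerivWithin_succ']; exact h0 (i + 1) (by omega)]
    rw [aux_L1 hs hx₀ _ _ _ (hu.of_le hstep) cv' fun i hi => h0 i (by omega)]
    rw [← iteratedDerivWithin_succ']
    simp


lemma aux_iDW_eq_iD {s : Set ℝ} (hs : IsOpen s) {x : ℝ} (hx : x ∈ s) (k : ℕ) (f : ℝ → ℝ) :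
    iteratedDerivWithin k f s x = iteratedDeriv k f x := by
  rw [iteratedDerivWithin_eq_iteratedFDerivWithin, iteratedDeriv_eq_iteratedFDeriv,
    iteratedFDerivWithin_of_isOpen k hs hx]

lemma aux_Y_zero (m : ℕ) : genY Φ (m + 1) x₀ x₀ = 0 ∧ genYt Φ (m + 1) x₀ x₀ = 0 := by
  constructor <;>
    simp [genY, genYt, genX, genXt, intervalIntegral.integral_same, mul_zero]

lemma aux_key {n : ℕ} (hΦ : ContDiffOn ℝ n Φ (Set.Ioo a b))
    (hΦ0 : ∀ y ∈ Set.Ioo a b, Φ y ≠ 0) (hx₀ : x₀ ∈ Set.Ioo a b) :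
    ∀ m, m ≤ n → ∀ j, j ≤ m →
      iteratedDerivWithin j (genY Φ m x₀) (Set.Ioo a b) x₀ =
        (if j = m then (if m % 2 = 1 then (m.factorial : ℝ) * Φ x₀ else (m.factorial : ℝ))
          else 0) ∧
      iteratedDerivWithin j (genYt Φ m x₀) (Set.Ioo a b) x₀ =
        (if j = m then (if m % 2 = 1 then (m.factorial : ℝ) * (Φ x₀)⁻¹ else (m.factorial : ℝ))
          else 0) := by
  have hΦc : ContinuousOn Φ (Set.Ioo a b) := hΦ.continuousOn
  have uD : UniqueDiffOn ℝ (Set.Ioo a b) := isOpen_Ioo.uniqueDiffOn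
  intro m
  induction m with
  | zero =>
    intro _ j hj
    interval_cases j
    have h1 : genY Φ 0 x₀ = fun _ => (1 : ℝ) := funext fun y => by simp [genY, genX]
    have h2 : genYt Φ 0 x₀ = fun _ => (1 : ℝ) := funext fun y => by simp [genYt, genXt]
    rw [h1, h2]
    simp [iteratedDerivWithin_zero]
  | succ m IH =>
    intro hmn j hj
    have hmn' : m ≤ n := by omega
    have IH' := IH hmn'
    match j with
    | 0 =>
      rw [iteratedDerivWithin_zero]
      rw [if_neg (by omega : ¬ (0 = m + 1))]
      exact aux_Y_zero m
    | (i + 1) =>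
      have hi : i ≤ m := by omega
      -- smoothness
      obtain ⟨SY, SYt⟩ := aux_smooth hΦ hΦ0 hx₀ m
      have hcasti : ((i : ℕ) : WithTop ℕ∞) ≤ ((n + 1 : ℕ) : WithTop ℕ∞) := by
        exact_mod_cast by omega
      have hΦi : ContDiffOn ℝ i Φ (Set.Ioo a b) := hΦ.of_le (by exact_mod_cast by omega)
      have hΦIi : ContDiffOn ℝ i (fun x => (Φ x)⁻¹) (Set.Ioo a b) :=
        (hΦ.inv hΦ0).of_le (by exact_mod_cast by omega)
      -- the scaled functions
      set c : ℝ := ((m + 1 : ℕ) : ℝ) with hc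
      have hcu : ContDiffOn ℝ i (fun x => c * genYt Φ m x₀ x) (Set.Ioo a b) :=
        contDiffOn_const.mul (SYt.of_le hcasti)
      have hcu' : ContDiffOn ℝ i (fun x => c * genY Φ m x₀ x) (Set.Ioo a b) :=
        contDiffOn_const.mul (SY.of_le hcasti)
      have hucm : ∀ q, q ≤ m → ∀ x ∈ Set.Ioo a b, True := fun _ _ _ _ => trivial
      have hval : ∀ q ≤ i, iteratedDerivWithin q (fun x => c * genYt Φ m x₀ x)
          (Set.Ioo a b) x₀ = c * iteratedDerivWithin q (genYt Φ m x₀) (Set.Ioo a b) x₀ :=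
        fun q hq => iteratedDerivWithin_const_mul hx₀ uD c
          ((SYt.of_le (by exact_mod_cast by omega)) x₀ hx₀)
      have hval' : ∀ q ≤ i, iteratedDerivWithin q (fun x => c * genY Φ m x₀ x)
          (Set.Ioo a b) x₀ = c * iteratedDerivWithin q (genY Φ m x₀) (Set.Ioo a b) x₀ :=
        fun q hq => iteratedDerivWithin_const_mul hx₀ uD c
          ((SY.of_le (by exact_mod_cast by omega)) x₀ hx₀)
      -- derivWithin identities
      have heqY : Set.EqOn (derivWithin (genY Φ (m + 1) x₀) (Set.Ioo a b))
          (fun x => (c * genYt Φ m x₀ x) * Φ x) (Set.Ioo a b) := by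
        intro x hx
        rw [derivWithin_of_isOpen isOpen_Ioo hx, (aux_derivY hΦc hΦ0 hx₀ m hx).1.deriv]
        ring
      have heqYt : Set.EqOn (derivWithin (genYt Φ (m + 1) x₀) (Set.Ioo a b))
          (fun x => (c * genY Φ m x₀ x) * (Φ x)⁻¹) (Set.Ioo a b) := by
        intro x hx
        rw [derivWithin_of_isOpen isOpen_Ioo hx, (aux_derivY hΦc hΦ0 hx₀ m hx).2.deriv]
        ring
      rw [iteratedDerivWithin_succ', iteratedDerivWithin_succ',
        iteratedDerivWithin_congr heqY hx₀, iteratedDerivWithin_congr heqYt hx₀]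
      rcases lt_or_eq_of_le hi with him | him
      · -- i < m : everything vanishes
        have hne : ¬ (i + 1 = m + 1) := by omega
        rw [if_neg hne, if_neg hne]
        constructor
        · refine aux_L1 isOpen_Ioo hx₀ i _ _ hcu hΦi fun q hq => ?_
          rw [hval q hq, (IH' q (by omega)).2, if_neg (by omega), mul_zero]
        · refine aux_L1 isOpen_Ioo hx₀ i _ _ hcu' hΦIi fun q hq => ?_
          rw [hval' q hq, (IH' q (by omega)).1, if_neg (by omega), mul_zero]
      · -- i = m : diagonal
        subst him
        have hΦx : Φ x₀ ≠ 0 := hΦ0 x₀ hx₀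
        rw [if_pos rfl, if_pos rfl]
        constructor
        · rw [aux_L2 isOpen_Ioo hx₀ i _ _ hcu hΦi fun q hq => by
            rw [hval q (by omega), (IH' q (by omega)).2, if_neg (by omega), mul_zero]]
          rw [hval i le_rfl, (IH' i le_rfl).2, if_pos rfl]
          rcases Nat.even_or_odd i with hp | hp
          · have h2 : i % 2 = 0 := Nat.even_iff.mp hp
            rw [if_neg (by omega), if_pos (by omega : (i + 1) % 2 = 1)]
            rw [Nat.factorial_succ]
            push_cast [hc]
            ring
          · have h2 : i % 2 = 1 := Nat.odd_iff.mp hp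
            rw [if_pos h2, if_neg (by omega : ¬ (i + 1) % 2 = 1)]
            rw [Nat.factorial_succ]
            push_cast [hc]
            field_simp <;> ring
        · rw [aux_L2 isOpen_Ioo hx₀ i _ _ hcu' hΦIi fun q hq => by
            rw [hval' q (by omega), (IH' q (by omega)).1, if_neg (by omega), mul_zero]]
          rw [hval' i le_rfl, (IH' i le_rfl).1, if_pos rfl]
          rcases Nat.even_or_odd i with hp | hp
          · have h2 : i % 2 = 0 := Nat.even_iff.mp hp
            rw [if_neg (by omega), if_pos (by omega : (i + 1) % 2 = 1)]
            rw [Nat.factorial_succ]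
            push_cast [hc]
            ring
          · have h2 : i % 2 = 1 := Nat.odd_iff.mp hp
            rw [if_pos h2, if_neg (by omega : ¬ (i + 1) % 2 = 1)]
            rw [Nat.factorial_succ]
            push_cast [hc]
            field_simp <;> ring


lemma aux_iDW_sum {s : Set ℝ} (hs : IsOpen s) {x₀ : ℝ} (hx₀ : x₀ ∈ s) (k : ℕ)
    {ι : Type*} (t : Finset ι) (f : ι → ℝ → ℝ)
    (hf : ∀ j ∈ t, ContDiffOn ℝ k (f j) s) :
    iteratedDerivWithin k (fun x => ∑ j ∈ t, f j x) s x₀ =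
      ∑ j ∈ t, iteratedDerivWithin k (f j) s x₀ := by
  classical
  induction t using Finset.induction_on with
  | empty =>
    simp only [Finset.sum_empty]
    have h0 := iteratedFDerivWithin_fun_zero (𝕜 := ℝ) (E := ℝ) (F := ℝ)
      (s := s) (i := k)
    rw [iteratedDerivWithin_eq_iteratedFDerivWithin, h0]
    simp
  | insert j t' hj IH =>
    have hfj : ContDiffOn ℝ k (f j) s := hf j (Finset.mem_insert_self j t')
    have hft : ∀ i ∈ t', ContDiffOn ℝ k (f i) s :=
      fun i hi => hf i (Finset.mem_insert_of_mem hi)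
    have hsum : ContDiffOn ℝ k (fun x => ∑ i ∈ t', f i x) s :=
      ContDiffOn.sum fun i hi => hft i hi
    have heq : (fun x => ∑ i ∈ insert j t', f i x) =
        ((fun x => f j x) + fun x => ∑ i ∈ t', f i x) := by
      funext x; simp [Finset.sum_insert hj]
    rw [heq, iteratedDerivWithin_add hx₀ hs.uniqueDiffOn (hfj x₀ hx₀) (hsum x₀ hx₀),
      Finset.sum_insert hj, IH hft]

lemma aux_prod (c : ℝ) (N : ℕ) :
    (∏ k ∈ Finset.range N,
      (if k % 2 = 1 then (k.factorial : ℝ) * c else (k.factorial : ℝ))) =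
      (∏ k ∈ Finset.range N, (k.factorial : ℝ)) * c ^ (N / 2) := by
  induction N with
  | zero => simp
  | succ N IH =>
    rw [Finset.prod_range_succ, Finset.prod_range_succ, IH]
    by_cases h : N % 2 = 1
    · rw [if_pos h, (by omega : (N + 1) / 2 = N / 2 + 1), pow_succ]; ring
    · rw [if_neg h, (by omega : (N + 1) / 2 = N / 2)]; ring

end Aux

theorem stmt_16 (a b : ℝ) (n : ℕ) (Φ : ℝ → ℝ)
    (hΦ : ContDiffOn ℝ n Φ (Set.Ioo a b))
    (hΦ0 : ∀ y ∈ Set.Ioo a b, Φ y ≠ 0) (x₀ : ℝ) (hx₀ : x₀ ∈ Set.Ioo a b) :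
    (∀ m ≤ n, iteratedDeriv m (genY Φ m x₀) x₀ =
      if m % 2 = 1 then (m.factorial : ℝ) * Φ x₀ else (m.factorial : ℝ)) ∧
    Matrix.det (Matrix.of fun i j : Fin (n + 1) =>
        iteratedDeriv (i : ℕ) (genY Φ (j : ℕ) x₀) x₀) =
      (∏ k ∈ Finset.range (n + 1), (k.factorial : ℝ)) * Φ x₀ ^ ((n + 1) / 2) ∧
    LinearIndependent ℝ (fun j : Fin (n + 1) => genY Φ (j : ℕ) x₀) := by
  classical
  have hΦx : Φ x₀ ≠ 0 := hΦ0 x₀ hx₀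
  -- Entry description
  have hdiag : ∀ m ≤ n, iteratedDeriv m (genY Φ m x₀) x₀ =
      if m % 2 = 1 then (m.factorial : ℝ) * Φ x₀ else (m.factorial : ℝ) := by
    intro m hm
    rw [← aux_iDW_eq_iD isOpen_Ioo hx₀ m, (aux_key hΦ hΦ0 hx₀ m hm m le_rfl).1, if_pos rfl]
  have hzero : ∀ i j, i < j → j ≤ n → iteratedDeriv i (genY Φ j x₀) x₀ = 0 := by
    intro i j hij hjn
    rw [← aux_iDW_eq_iD isOpen_Ioo hx₀ i, (aux_key hΦ hΦ0 hx₀ j hjn i (le_of_lt hij)).1,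
      if_neg (by omega)]
  set M : Matrix (Fin (n + 1)) (Fin (n + 1)) ℝ :=
    Matrix.of fun i j : Fin (n + 1) => iteratedDeriv (i : ℕ) (genY Φ (j : ℕ) x₀) x₀ with hM
  have htri : M.BlockTriangular OrderDual.toDual := by
    intro i j hij
    exact hzero (i : ℕ) (j : ℕ) hij (by omega)
  have hdet : M.det = (∏ k ∈ Finset.range (n + 1), (k.factorial : ℝ)) *
      Φ x₀ ^ ((n + 1) / 2) := by
    rw [Matrix.det_of_lowerTriangular M htri]
    have : ∀ i : Fin (n + 1), M i i =
        (if (i : ℕ) % 2 = 1 then ((i : ℕ).factorial : ℝ) * Φ x₀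
          else ((i : ℕ).factorial : ℝ)) := fun i => hdiag (i : ℕ) (by omega)
    rw [Finset.prod_congr rfl fun i _ => this i]
    rw [Fin.prod_univ_eq_prod_range
      (fun k => if k % 2 = 1 then (k.factorial : ℝ) * Φ x₀ else (k.factorial : ℝ)) (n + 1)]
    exact aux_prod (Φ x₀) (n + 1)
  have hdetne : M.det ≠ 0 := by
    rw [hdet]
    refine mul_ne_zero (Finset.prod_ne_zero_iff.mpr fun k _ => ?_) (pow_ne_zero _ hΦx)
    exact_mod_cast Nat.factorial_ne_zero k
  refine ⟨hdiag, hdet, ?_⟩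
  rw [Fintype.linearIndependent_iff]
  intro g hg
  have hrow : ∀ i : Fin (n + 1), M.mulVec g i = 0 := by
    intro i
    have hcast : ((i : ℕ) : WithTop ℕ∞) ≤ ((n + 1 : ℕ) : WithTop ℕ∞) := by
      exact_mod_cast by omega
    have hfun : (fun x => ∑ j : Fin (n + 1), g j * genY Φ (j : ℕ) x₀ x) =
        (fun _ => (0 : ℝ)) := by
      funext x
      have := congrFun hg x
      simpa [Finset.sum_apply, Pi.smul_apply, smul_eq_mul] using this
    have hsmooth : ∀ j : Fin (n + 1), j ∈ (Finset.univ : Finset (Fin (n + 1))) →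
        ContDiffOn ℝ (i : ℕ) (fun x => g j * genY Φ (j : ℕ) x₀ x) (Set.Ioo a b) :=
      fun j _ => contDiffOn_const.mul
        ((aux_smooth hΦ hΦ0 hx₀ (j : ℕ)).1.of_le hcast)
    have h1 : iteratedDerivWithin (i : ℕ)
        (fun x => ∑ j : Fin (n + 1), g j * genY Φ (j : ℕ) x₀ x) (Set.Ioo a b) x₀ =
        ∑ j : Fin (n + 1), iteratedDerivWithin (i : ℕ)
          (fun x => g j * genY Φ (j : ℕ) x₀ x) (Set.Ioo a b) x₀ :=
      aux_iDW_sum isOpen_Ioo hx₀ (i : ℕ) Finset.univ _ hsmooth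
    have h2 : iteratedDerivWithin (i : ℕ)
        (fun x => ∑ j : Fin (n + 1), g j * genY Φ (j : ℕ) x₀ x) (Set.Ioo a b) x₀ = 0 := by
      rw [hfun]
      have h0 := iteratedFDerivWithin_fun_zero (𝕜 := ℝ) (E := ℝ) (F := ℝ)
        (s := Set.Ioo a b) (i := (i : ℕ))
      rw [iteratedDerivWithin_eq_iteratedFDerivWithin, h0]
      simp
    have h3 : ∀ j : Fin (n + 1), iteratedDerivWithin (i : ℕ)
        (fun x => g j * genY Φ (j : ℕ) x₀ x) (Set.Ioo a b) x₀ = g j * M i j := by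
      intro j
      rw [iteratedDerivWithin_const_mul hx₀ isOpen_Ioo.uniqueDiffOn (g j)
        (((aux_smooth hΦ hΦ0 hx₀ (j : ℕ)).1.of_le hcast) x₀ hx₀)]
      rw [aux_iDW_eq_iD isOpen_Ioo hx₀]
      rfl
    have : ∑ j : Fin (n + 1), g j * M i j = 0 := by
      rw [← Finset.sum_congr rfl fun j _ => h3 j, ← h1, h2]
    have hmv : M.mulVec g i = ∑ j, M i j * g j := by
      simp [Matrix.mulVec, dotProduct]
    rw [hmv, ← this]
    exact Finset.sum_congr rfl fun j _ => mul_comm _ _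
  have hg0 : g = 0 := Matrix.eq_zero_of_mulVec_eq_zero hdetne (funext hrow)
  exact fun i => congrFun hg0 i
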